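/- Let λ, Λ > 0 be such that λ‖u‖² ≤ |||u|||² ≤ Λ‖u‖² for all u ∈ V_h. Then the additive Schwarz operator P_ad = Σ_{i=1}^n P_i satisfies (1/Λ)‖u‖² ≤ ⟨P_ad u, u⟩ ≤ (1/λ)‖u‖² for all u ∈ V_h; consequently the spectral condition number of P_ad (the ratio of its largest to its smallest eigenvalue, equivalently the ratio of the supremum to the infimum of the Rayleigh quotient ⟨P_ad u, u⟩/‖u‖² over nonzero u ∈ V_h) is at most Λ/λ. -/

import Mathlib

open scoped RealInnerProductSpace

/-- The squared splitting norm `|||u|||²` associated to a family of subspaces: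
the infimum of `∑ i, ‖u_i‖²` over all decompositions `u = ∑ i, u_i` with `u_i ∈ V_{h,i}`. -/
noncomputable def splitNormSq {V : Type*} [NormedAddCommGroup V] [InnerProductSpace ℝ V]
    {n : ℕ} (Vsub : Fin n → Submodule ℝ V) (u : V) : ℝ :=
  sInf {s : ℝ | ∃ w : Fin n → V, (∀ i, w i ∈ Vsub i) ∧ (∑ i, w i) = u ∧ s = ∑ i, ‖w i‖ ^ 2}

/-- Abstract condition number estimate for additive Schwarz subspace splittings. -/
theorem additiveSchwarz_condition_number
    {V : Type*} [NormedAddCommGroup V] [InnerProductSpace ℝ V] [CompleteSpace V]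
    {n : ℕ} (Vsub : Fin n → Submodule ℝ V) [∀ i, FiniteDimensional ℝ (Vsub i)]
    (Vh : Submodule ℝ V) (hVh : Vh = ⨆ i, Vsub i)
    (lam Lam : ℝ) (hlam : 0 < lam) (hLam : 0 < Lam)
    (hsplit : ∀ u ∈ Vh,
      lam * ‖u‖ ^ 2 ≤ splitNormSq Vsub u ∧ splitNormSq Vsub u ≤ Lam * ‖u‖ ^ 2)
    (Pad : V → V) (hPad : ∀ u, Pad u = ∑ i, ((Submodule.orthogonalProjectionOnto (Vsub i) u : V))) :
    (∀ u ∈ Vh, (1 / Lam) * ‖u‖ ^ 2 ≤ ⟪Pad u, u⟫ ∧ ⟪Pad u, u⟫ ≤ (1 / lam) * ‖u‖ ^ 2) ∧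
    sSup {r : ℝ | ∃ u ∈ Vh, u ≠ 0 ∧ r = ⟪Pad u, u⟫ / ‖u‖ ^ 2} /
        sInf {r : ℝ | ∃ u ∈ Vh, u ≠ 0 ∧ r = ⟪Pad u, u⟫ / ‖u‖ ^ 2} ≤ Lam / lam := by
  classical
  set P : Fin n → V → V := fun i u => (Submodule.orthogonalProjectionOnto (Vsub i) u : V) with hPdef
  -- For v ∈ Vsub i, ⟪v, u⟫ = ⟪v, P i u⟫
  have hA : ∀ (i : Fin n) (u v : V), v ∈ Vsub i → ⟪v, u⟫ = ⟪v, P i u⟫ := by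
    intro i u v hv
    have h0 : ⟪u - P i u, v⟫ = 0 := Submodule.starProjection_inner_eq_zero (K := Vsub i) u v hv
    have h1 : ⟪v, u - P i u⟫ = 0 := by rw [real_inner_comm]; exact h0
    have h2 : ⟪v, u - P i u⟫ = ⟪v, u⟫ - ⟪v, P i u⟫ := inner_sub_right v u (P i u)
    linarith
  -- ⟪Pad u, u⟫ = ∑ ‖P i u‖²
  have hQ : ∀ u : V, ⟪Pad u, u⟫ = ∑ i, ‖P i u‖ ^ 2 := by
    intro u
    rw [hPad, sum_inner]
    refine Finset.sum_congr rfl fun i _ => ?_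
    have h := hA i u (P i u) (SetLike.coe_mem _)
    show ⟪P i u, u⟫ = ‖P i u‖ ^ 2
    rw [h, real_inner_self_eq_norm_sq]
  have hQnn : ∀ u : V, (0:ℝ) ≤ ∑ i, ‖P i u‖ ^ 2 := fun u =>
    Finset.sum_nonneg fun i _ => sq_nonneg _
  have hPadmem : ∀ u : V, Pad u ∈ Vh := by
    intro u
    rw [hPad, hVh]
    exact Submodule.sum_mem _ fun i _ => (le_iSup Vsub i) (SetLike.coe_mem _)
  -- the key Cauchy-Schwarz estimate
  have hkey : ∀ (u : V) (w : Fin n → V), (∀ i, w i ∈ Vsub i) → (∑ i, w i) = u →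
      ‖u‖ ^ 2 * ‖u‖ ^ 2 ≤ (∑ i, ‖w i‖ ^ 2) * (∑ i, ‖P i u‖ ^ 2) := by
    intro u w hw hsum
    have e1 : ∑ i, ⟪w i, u⟫ = ⟪u, u⟫ := by rw [← sum_inner, hsum]
    have h1 : ‖u‖ ^ 2 = ∑ i, ⟪w i, P i u⟫ := by
      rw [← real_inner_self_eq_norm_sq, ← e1]
      exact Finset.sum_congr rfl fun i _ => hA i u (w i) (hw i)
    have h2 : ∑ i, ⟪w i, P i u⟫ ≤ ∑ i, ‖w i‖ * ‖P i u‖ :=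
      Finset.sum_le_sum fun i _ => real_inner_le_norm _ _
    have h3 : (∑ i, ‖w i‖ * ‖P i u‖) ^ 2 ≤ (∑ i, ‖w i‖ ^ 2) * (∑ i, ‖P i u‖ ^ 2) :=
      Finset.sum_mul_sq_le_sq_mul_sq _ _ _
    have h4 : ‖u‖ ^ 2 ≤ ∑ i, ‖w i‖ * ‖P i u‖ := h1 ▸ h2
    have h5 : (‖u‖ ^ 2) ^ 2 ≤ (∑ i, ‖w i‖ * ‖P i u‖) ^ 2 :=
      pow_le_pow_left₀ (sq_nonneg _) h4 2
    calc ‖u‖ ^ 2 * ‖u‖ ^ 2 = (‖u‖ ^ 2) ^ 2 := (sq _).symm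
      _ ≤ (∑ i, ‖w i‖ * ‖P i u‖) ^ 2 := h5
      _ ≤ _ := h3
  have hbdd : ∀ u : V, BddBelow {s : ℝ | ∃ w : Fin n → V,
      (∀ i, w i ∈ Vsub i) ∧ (∑ i, w i) = u ∧ s = ∑ i, ‖w i‖ ^ 2} := by
    intro u
    refine ⟨0, fun s hs => ?_⟩
    obtain ⟨w, -, -, rfl⟩ := hs
    exact Finset.sum_nonneg fun i _ => sq_nonneg _
  -- upper bound, valid for all u
  have hup : ∀ u : V, ⟪Pad u, u⟫ ≤ (1 / lam) * ‖u‖ ^ 2 := by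
    intro u
    have hqv : ⟪Pad u, u⟫ = ∑ i, ‖P i u‖ ^ 2 := hQ u
    set v := Pad u with hv
    set q := ∑ i, ‖P i u‖ ^ 2 with hq
    have hsn : splitNormSq Vsub v ≤ q := by
      apply csInf_le (hbdd v)
      exact ⟨fun i => P i u, fun i => SetLike.coe_mem _, (hPad u).symm, rfl⟩
    have h1 : lam * ‖v‖ ^ 2 ≤ q := le_trans (hsplit v (hPadmem u)).1 hsn
    have h2 : q ≤ ‖v‖ * ‖u‖ := hqv ▸ real_inner_le_norm v u
    rw [hqv]
    rcases eq_or_lt_of_le (norm_nonneg v) with hv0 | hv0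
    · have ha : q ≤ 0 := by rw [← hv0] at h2; simpa using h2
      have hb : (0:ℝ) ≤ (1 / lam) * ‖u‖ ^ 2 :=
        mul_nonneg (one_div_pos.mpr hlam).le (sq_nonneg _)
      linarith
    · have h3 : lam * ‖v‖ ^ 2 ≤ ‖v‖ * ‖u‖ := le_trans h1 h2
      have h4 : lam * ‖v‖ ≤ ‖u‖ := by nlinarith [h3, mul_pos hv0 hv0]
      have h5 : ‖v‖ ≤ (1 / lam) * ‖u‖ := by
        rw [one_div, ← div_eq_inv_mul, le_div_iff₀ hlam]
        linarith
      calc q ≤ ‖v‖ * ‖u‖ := h2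
        _ ≤ ((1 / lam) * ‖u‖) * ‖u‖ :=
            mul_le_mul_of_nonneg_right h5 (norm_nonneg u)
        _ = (1 / lam) * ‖u‖ ^ 2 := by ring
  -- lower bound on Vh
  have hlow : ∀ u ∈ Vh, (1 / Lam) * ‖u‖ ^ 2 ≤ ⟪Pad u, u⟫ := by
    intro u hu
    by_cases h0 : u = 0
    · simp [h0]
    · have hu' : u ∈ ⨆ i, Vsub i := hVh ▸ hu
      rw [Submodule.mem_iSup_iff_exists_finsupp] at hu'
      obtain ⟨f, hf, hfsum⟩ := hu'
      have hsum : ∑ i, f i = u := by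
        rw [← hfsum]
        exact (Finsupp.sum_fintype f (fun _ x => x) (fun i => rfl)).symm
      have hqv : ⟪Pad u, u⟫ = ∑ i, ‖P i u‖ ^ 2 := hQ u
      set q := ∑ i, ‖P i u‖ ^ 2 with hqdef
      have hu2 : (0:ℝ) < ‖u‖ ^ 2 := pow_pos (norm_pos_iff.mpr h0) 2
      have hk0 : ‖u‖ ^ 2 * ‖u‖ ^ 2 ≤ (∑ i, ‖f i‖ ^ 2) * q :=
        hkey u (fun i => f i) hf hsum
      have hqpos : 0 < q := by
        by_contra hcon
        push_neg at hcon
        have hs0 : (0:ℝ) ≤ ∑ i, ‖f i‖ ^ 2 := Finset.sum_nonneg fun i _ => sq_nonneg _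
        have hmp : (∑ i, ‖f i‖ ^ 2) * q ≤ 0 := mul_nonpos_iff.mpr (Or.inl ⟨hs0, hcon⟩)
        nlinarith [mul_pos hu2 hu2]
      have hinf : ‖u‖ ^ 2 * ‖u‖ ^ 2 / q ≤ splitNormSq Vsub u := by
        refine le_csInf ?_ ?_
        · exact Set.nonempty_of_mem (show (∑ i, ‖(f i : V)‖ ^ 2) ∈ _ from ⟨fun i => f i, hf, hsum, rfl⟩)
        rintro s ⟨w, hw, hws, rfl⟩
        rw [div_le_iff₀ hqpos]
        exact hkey u w hw hws
      have hΛ : ‖u‖ ^ 2 * ‖u‖ ^ 2 / q ≤ Lam * ‖u‖ ^ 2 :=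
        le_trans hinf (hsplit u hu).2
      rw [div_le_iff₀ hqpos] at hΛ
      rw [hqv, one_div, ← div_eq_inv_mul, div_le_iff₀ hLam]
      nlinarith [hΛ, hu2]
  refine ⟨fun u hu => ⟨hlow u hu, hup u⟩, ?_⟩
  set S : Set ℝ := {r : ℝ | ∃ u ∈ Vh, u ≠ 0 ∧ r = ⟪Pad u, u⟫ / ‖u‖ ^ 2} with hS
  by_cases hSne : S.Nonempty
  · have hub : ∀ r ∈ S, r ≤ 1 / lam := by
      rintro r ⟨u, hu, hune, rfl⟩
      have hu2 : (0:ℝ) < ‖u‖ ^ 2 := pow_pos (norm_pos_iff.mpr hune) 2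
      rw [div_le_iff₀ hu2]
      have := hup u
      linarith
    have hlb : ∀ r ∈ S, 1 / Lam ≤ r := by
      rintro r ⟨u, hu, hune, rfl⟩
      have hu2 : (0:ℝ) < ‖u‖ ^ 2 := pow_pos (norm_pos_iff.mpr hune) 2
      rw [le_div_iff₀ hu2]
      exact hlow u hu
    have hsup : sSup S ≤ 1 / lam := csSup_le hSne hub
    have hinf : 1 / Lam ≤ sInf S := le_csInf hSne hlb
    calc sSup S / sInf S ≤ (1 / lam) / (1 / Lam) :=
          div_le_div₀ (one_div_pos.mpr hlam).le hsup (one_div_pos.mpr hLam) hinf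
      _ = Lam / lam := by
          rw [div_eq_mul_inv (1 / lam), one_div Lam, inv_inv, one_div_mul_eq_div]
  · have hSempty : S = ∅ := Set.not_nonempty_iff_eq_empty.mp hSne
    rw [hSempty, Real.sSup_empty, Real.sInf_empty]
    simp only [zero_div]
    positivity
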